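/- Let (X,d) be a metric space, x₀ ∈ X, and let T, α, ε, K > 0 satisfy (2K+1)ε < 1/2. Let f : X × (0,T] → ℝ be a nonnegative function that is bounded on the set {x ∈ X : d(x₀,x) ≤ 1/2} × (0,T]. Suppose there exist x₁ ∈ X and t₁ ∈ (0,T] with d(x₀,x₁) ≤ ε and f(x₁,t₁)² ≥ α/t₁ + ε^{−2}. Then there exist x̄ ∈ X and t̄ ∈ (0,T] such that, setting Q = f(x̄,t̄), one has d(x₀,x̄) ≤ (2K+1)ε, Q ≥ ε^{−1}, Q² ≥ α/t̄, and f(x,t) ≤ 4Q for every pair (x,t) ∈ X × (0,T] with t̄ − (3/4)α Q^{−2} ≤ t ≤ t̄ and d(x,x̄) ≤ K Q^{−1}. -/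

import Mathlib

set_option maxHeartbeats 1000000 in
/-- Abstract content of Lemma 7.4: existence of a point `(xb, tb)` controlling a full
parabolic neighbourhood, phrased for an arbitrary nonnegative function `f` on a
metric space times a time interval `(0,T]`. -/
theorem parabolic_point_picking {X : Type*} [MetricSpace X] (x₀ : X)
    (T α ε K : ℝ) (hT : 0 < T) (hα : 0 < α) (hε : 0 < ε) (hK : 0 < K)
    (hKε : (2*K + 1) * ε < 1/2)
    (f : X → ℝ → ℝ)
    (hf_nonneg : ∀ x : X, ∀ t ∈ Set.Ioc (0:ℝ) T, 0 ≤ f x t)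
    (hf_bdd : ∃ B : ℝ, ∀ x : X, ∀ t ∈ Set.Ioc (0:ℝ) T,
      dist x₀ x ≤ 1/2 → f x t ≤ B)
    (x₁ : X) (t₁ : ℝ) (ht₁ : t₁ ∈ Set.Ioc (0:ℝ) T)
    (hd₁ : dist x₀ x₁ ≤ ε)
    (hf₁ : α / t₁ + ε⁻¹^2 ≤ (f x₁ t₁)^2) :
    ∃ xb : X, ∃ tb : ℝ, tb ∈ Set.Ioc (0:ℝ) T ∧
      dist x₀ xb ≤ (2*K + 1) * ε ∧
      ε⁻¹ ≤ f xb tb ∧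
      α / tb ≤ (f xb tb)^2 ∧
      ∀ x : X, ∀ t ∈ Set.Ioc (0:ℝ) T,
        tb - (3/4) * α * (f xb tb)⁻¹^2 ≤ t → t ≤ tb →
        dist x xb ≤ K * (f xb tb)⁻¹ →
        f x t ≤ 4 * f xb tb := by
  obtain ⟨B, hB⟩ := hf_bdd
  by_contra hcon
  push_neg at hcon
  have hεinv : (0:ℝ) < ε⁻¹ := by positivity
  have hε1 : ε < 1/2 := by nlinarith
  have hεinv1 : (1:ℝ) ≤ ε⁻¹ := by
    rw [one_le_inv_iff₀]
    exact ⟨hε, by linarith⟩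
  -- the invariant maintained along the sequence
  set Inv : X → ℝ → Prop := fun x t =>
    t ∈ Set.Ioc (0:ℝ) T ∧ dist x₀ x ≤ (2*K+1)*ε - 2*K*(f x t)⁻¹ ∧
      α / t + ε⁻¹^2 ≤ (f x t)^2 with hInvdef
  have hlow : ∀ x t, Inv x t → ε⁻¹ ≤ f x t := by
    rintro x t ⟨ht, _, hq⟩
    have h0 : 0 < α / t := div_pos hα ht.1
    have hfn : 0 ≤ f x t := hf_nonneg x t ht
    nlinarith [sq_nonneg (f x t + ε⁻¹)]
  have inv₁ : Inv x₁ t₁ := by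
    refine ⟨ht₁, ?_, hf₁⟩
    have hQ : ε⁻¹ ≤ f x₁ t₁ := by
      have hfn : 0 ≤ f x₁ t₁ := hf_nonneg x₁ t₁ ht₁
      have h0 : 0 < α / t₁ := div_pos hα ht₁.1
      nlinarith [sq_nonneg (f x₁ t₁ + ε⁻¹)]
    have hQpos : 0 < f x₁ t₁ := lt_of_lt_of_le hεinv hQ
    have hinv : (f x₁ t₁)⁻¹ ≤ ε := by
      calc (f x₁ t₁)⁻¹ ≤ (ε⁻¹)⁻¹ := by
            exact inv_anti₀ hεinv hQ
        _ = ε := inv_inv ε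
    nlinarith
  -- the key step: from a point satisfying the invariant, produce a 4x better one
  have step : ∀ x t, Inv x t → ∃ x' t', Inv x' t' ∧ 4 * f x t ≤ f x' t' := by
    rintro x t hI
    obtain ⟨ht, hd, hq⟩ := hI
    have hQ : ε⁻¹ ≤ f x t := hlow x t ⟨ht, hd, hq⟩
    have hQpos : 0 < f x t := lt_of_lt_of_le hεinv hQ
    have hQinv : 0 < (f x t)⁻¹ := by positivity
    have hd' : dist x₀ x ≤ (2*K+1)*ε := by nlinarith
    have hαt : α / t ≤ (f x t)^2 := by
      have h0 : 0 < ε⁻¹^2 := by positivity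
      linarith
    obtain ⟨x', t', ht', hA, hBt, hC, h4⟩ := hcon x t ht hd' hQ hαt
    have hQ' : 4 * f x t ≤ f x' t' := le_of_lt h4
    have hQ'pos : 0 < f x' t' := by linarith [mul_pos (by norm_num : (0:ℝ) < 4) hQpos]
    -- time bound : t' ≥ (1/4) α (f x t)⁻²
    have htlow : α / (f x t)^2 ≤ t := by
      rw [div_le_iff₀ (by positivity)]
      have := (div_le_iff₀ ht.1).mp hαt
      linarith
    have hinv2 : (f x t)⁻¹^2 = ((f x t)^2)⁻¹ := by rw [← inv_pow]
    have ht'low : (1/4) * α * (f x t)⁻¹^2 ≤ t' := by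
      have htlow' : α * ((f x t)^2)⁻¹ ≤ t := by
        rw [← div_eq_mul_inv]; exact htlow
      rw [hinv2]; rw [hinv2] at hA
      linarith
    have ht'pos : 0 < t' := ht'.1
    have hαt' : α / t' ≤ 4 * (f x t)^2 := by
      rw [div_le_iff₀ ht'pos]
      have h1 : (1/4) * α * (f x t)⁻¹^2 * (4 * (f x t)^2) = α := by
        rw [hinv2]
        field_simp
      calc α = (1/4) * α * (f x t)⁻¹^2 * (4 * (f x t)^2) := h1.symm
        _ ≤ t' * (4 * (f x t)^2) :=
            mul_le_mul_of_nonneg_right ht'low (by positivity)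
        _ = 4 * (f x t)^2 * t' := by ring
    -- quadratic bounds
    have hsq16 : 16 * (f x t)^2 ≤ (f x' t')^2 := by
      nlinarith [mul_le_mul hQ' hQ' (by positivity : (0:ℝ) ≤ 4 * f x t) (le_of_lt hQ'pos)]
    have hsqε : ε⁻¹^2 ≤ (f x t)^2 := by
      nlinarith [mul_le_mul hQ hQ (le_of_lt hεinv) (le_of_lt hQpos)]
    refine ⟨x', t', ⟨ht', ?_, by linarith [sq_nonneg (f x t)]⟩, hQ'⟩
    -- distance bound
    have htri : dist x₀ x' ≤ dist x₀ x + dist x' x := by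
      rw [dist_comm x' x]; exact dist_triangle x₀ x x'
    have hinvle : (f x' t')⁻¹ ≤ (4 * f x t)⁻¹ := inv_anti₀ (by positivity) hQ'
    have h4inv : (4 * f x t)⁻¹ = (f x t)⁻¹ / 4 := by
      rw [mul_inv]; ring
    have h2 : 2*K*(f x' t')⁻¹ ≤ K * (f x t)⁻¹ := by
      have hm := mul_le_mul_of_nonneg_left hinvle (by positivity : (0:ℝ) ≤ 2*K)
      rw [h4inv] at hm
      have hp : 0 ≤ K * (f x t)⁻¹ := by positivity
      linarith
    linarith [hC, htri]
  -- build the sequence and derive a contradiction with boundedness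
  have hstep' : ∀ p : {p : X × ℝ // Inv p.1 p.2},
      ∃ q : {p : X × ℝ // Inv p.1 p.2},
        4 * f p.1.1 p.1.2 ≤ f q.1.1 q.1.2 := by
    rintro ⟨⟨x, t⟩, hI⟩
    obtain ⟨x', t', hI', hle⟩ := step x t hI
    exact ⟨⟨(x', t'), hI'⟩, hle⟩
  choose next hnext using hstep'
  set g : ℕ → {p : X × ℝ // Inv p.1 p.2} :=
    fun n => next^[n] ⟨(x₁, t₁), inv₁⟩ with hg
  have hgrow : ∀ n : ℕ, (n : ℝ) ≤ f (g n).1.1 (g n).1.2 := by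
    intro n
    induction n with
    | zero =>
      simp only [hg, Function.iterate_zero, id]
      exact_mod_cast le_trans (by norm_num) (le_trans hεinv1 (hlow _ _ inv₁))
    | succ n ih =>
      have hsucc : g (n+1) = next (g n) := Function.iterate_succ_apply' next n _
      have h4 : 4 * f (g n).1.1 (g n).1.2 ≤ f (g (n+1)).1.1 (g (n+1)).1.2 := by
        rw [hsucc]; exact hnext (g n)
      have h1 : (1:ℝ) ≤ f (g n).1.1 (g n).1.2 :=
        le_trans hεinv1 (hlow _ _ (g n).2)
      push_cast
      linarith
  -- apply to n large
  set n := ⌈B⌉₊ + 1 with hn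
  obtain ⟨htn, hdn, hqn⟩ := (g n).2
  have hdist : dist x₀ (g n).1.1 ≤ 1/2 := by
    have hQ : ε⁻¹ ≤ f (g n).1.1 (g n).1.2 := hlow _ _ (g n).2
    have hQpos : 0 < f (g n).1.1 (g n).1.2 := lt_of_lt_of_le hεinv hQ
    have : 0 ≤ 2*K*(f (g n).1.1 (g n).1.2)⁻¹ := by positivity
    linarith
  have hbd : f (g n).1.1 (g n).1.2 ≤ B := hB _ _ htn hdist
  have hBn : B < (n : ℝ) := by
    have := Nat.le_ceil B
    push_cast [hn]
    push_cast at this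
    linarith
  linarith [hgrow n]
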